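/- Let r be a prime, a ≥ 1 an integer, e = r^a, and let ζ ∈ ℂ be a primitive e-th root of unity. Write R = ℤ[ζ] and let 𝔭 be the ideal of R generated by 1 − ζ. Let A be an R-algebra and let M, N be A-modules carrying compatible R-module structures that are free of finite rank as R-modules. If Hom_A(M, N) ≠ {0}, then there exists a nonzero A-linear map M/𝔭M → N/𝔭N; that is, Hom_A(M/𝔭M, N/𝔭N) ≠ {0}. -/

import Mathlib

/-- `ℤ[ζ]`, the subring of `ℂ` generated by `ζ`. -/
noncomputable def cycloRing (ζ : ℂ) : Subalgebra ℤ ℂ := Algebra.adjoin ℤ {ζ}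

/-- `ζ` as an element of `ℤ[ζ]`. -/
noncomputable def cycloZeta (ζ : ℂ) : cycloRing ζ :=
  ⟨ζ, Algebra.self_mem_adjoin_singleton ℤ ζ⟩

/-- The `A`-submodule `𝔭M = (1 - ζ)M` of an `A`-module `M` with compatible
`ℤ[ζ]`-module structure. -/
noncomputable def pModule (ζ : ℂ) (A : Type) [Ring A] [Algebra (cycloRing ζ) A]
    (M : Type) [AddCommGroup M] [Module (cycloRing ζ) M] [Module A M]
    [IsScalarTower (cycloRing ζ) A M] : Submodule A M :=
  LinearMap.range ((1 - cycloZeta ζ) • (LinearMap.id : M →ₗ[A] M))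

lemma mem_pModule_iff (ζ : ℂ) (A : Type) [Ring A] [Algebra (cycloRing ζ) A]
    (M : Type) [AddCommGroup M] [Module (cycloRing ζ) M] [Module A M]
    [IsScalarTower (cycloRing ζ) A M] (x : M) :
    x ∈ pModule ζ A M ↔ ∃ y : M, (1 - cycloZeta ζ) • y = x := by
  simp [pModule]

/-- `1 - ζ` is not a unit in `ℤ[ζ]`. -/
lemma pi_not_unit (r a : ℕ) (hr : r.Prime) (ha : 1 ≤ a) (ζ : ℂ)
    (hζ : IsPrimitiveRoot ζ (r ^ a)) : ¬ IsUnit (1 - cycloZeta ζ) := by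
  intro h
  obtain ⟨k, rfl⟩ : ∃ k, a = k + 1 := ⟨a - 1, by omega⟩
  haveI : Fact r.Prime := ⟨hr⟩
  have hpos : 0 < r ^ (k + 1) := pow_pos hr.pos _
  have hint : IsIntegral ℤ ζ := hζ.isIntegral hpos
  obtain ⟨b, hb⟩ := isUnit_iff_exists_inv.mp h
  have hbmem : (b : ℂ) ∈ Algebra.adjoin ℤ {ζ} := b.2
  rw [Algebra.adjoin_singleton_eq_range_aeval] at hbmem
  obtain ⟨P, hP0⟩ := hbmem
  have hP : Polynomial.aeval ζ P = (b : ℂ) := hP0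
  set Q : Polynomial ℤ := (1 - Polynomial.X) * P - 1 with hQdef
  have hQ : Polynomial.aeval ζ Q = 0 := by
    have hb' : (1 - ζ) * (b : ℂ) = 1 := by
      have := congrArg (Subtype.val) hb
      push_cast at this
      simpa [cycloZeta] using this
    simp only [hQdef, map_sub, map_mul, map_one, Polynomial.aeval_X, hP]
    rw [hb']
    ring
  have hdvd : minpoly ℤ ζ ∣ Q := minpoly.isIntegrallyClosed_dvd hint hQ
  rw [← Polynomial.cyclotomic_eq_minpoly hζ hpos] at hdvd
  obtain ⟨C, hC⟩ := hdvd
  have h1 := congrArg (Polynomial.eval 1) hC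
  rw [Polynomial.eval_mul, Polynomial.eval_one_cyclotomic_prime_pow] at h1
  simp only [hQdef, Polynomial.eval_sub, Polynomial.eval_mul, Polynomial.eval_one,
    Polynomial.eval_X, sub_self, zero_mul, zero_sub] at h1
  have : (r : ℤ) ∣ -1 := ⟨Polynomial.eval 1 C, h1⟩
  have : (r : ℤ) ∣ 1 := (dvd_neg.mp this)
  have hr1 : r ∣ 1 := by exact_mod_cast this
  have := Nat.dvd_one.mp hr1
  have := hr.one_lt
  omega


lemma cyclo_finite (r a : ℕ) (hr : r.Prime) (ha : 1 ≤ a) (ζ : ℂ)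
    (hζ : IsPrimitiveRoot ζ (r ^ a)) : Module.Finite ℤ (cycloRing ζ) :=
  ⟨(Submodule.fg_top _).mpr (hζ.isIntegral (pow_pos hr.pos a)).fg_adjoin_singleton⟩

lemma cyclo_noetherian (r a : ℕ) (hr : r.Prime) (ha : 1 ≤ a) (ζ : ℂ)
    (hζ : IsPrimitiveRoot ζ (r ^ a)) : IsNoetherianRing (cycloRing ζ) := by
  letI : Module (cycloRing ζ) (cycloRing ζ) := Semiring.toModule
  haveI := cyclo_finite r a hr ha ζ hζ
  exact isNoetherianRing_iff.mpr (isNoetherian_of_tower ℤ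
    (inferInstance : IsNoetherian ℤ (cycloRing ζ)))

lemma cyclo_domain (ζ : ℂ) : IsDomain (cycloRing ζ) := inferInstance

section
attribute [local irreducible] cycloRing

set_option maxHeartbeats 1600000 in
set_option synthInstance.maxHeartbeats 400000 in
/-- Let `r` be a prime, `a ≥ 1`, `e = r^a`, `ζ ∈ ℂ` a primitive `e`-th root of unity,
`R = ℤ[ζ]` and `𝔭 = (1 - ζ) ⊆ R`.  Let `A` be an `R`-algebra and `M`, `N` be `A`-modules
carrying compatible `R`-module structures which are free of finite rank as `R`-modules.
If `Hom_A(M, N) ≠ 0` then there is a nonzero `A`-linear map `M/𝔭M → N/𝔭N`. -/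
theorem statement1 (r a : ℕ) (hr : r.Prime) (ha : 1 ≤ a) (ζ : ℂ)
    (hζ : IsPrimitiveRoot ζ (r ^ a))
    (A : Type) [Ring A] [Algebra (cycloRing ζ) A]
    (M N : Type) [AddCommGroup M] [AddCommGroup N]
    [Module (cycloRing ζ) M] [Module (cycloRing ζ) N]
    [Module A M] [Module A N]
    [IsScalarTower (cycloRing ζ) A M] [IsScalarTower (cycloRing ζ) A N]
    [Module.Free (cycloRing ζ) M] [Module.Finite (cycloRing ζ) M]
    [Module.Free (cycloRing ζ) N] [Module.Finite (cycloRing ζ) N]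
    (hne : ∃ ψ : M →ₗ[A] N, ψ ≠ 0) :
    ∃ f : (M ⧸ pModule ζ A M) →ₗ[A] (N ⧸ pModule ζ A N), f ≠ 0 := by
  classical
  letI : Module (cycloRing ζ) (cycloRing ζ) := Semiring.toModule
  letI : Module (cycloRing ζ)
      ((Module.Free.ChooseBasisIndex (cycloRing ζ) N) →₀ (cycloRing ζ)) :=
    Finsupp.module _ _
  obtain ⟨ψ, hψ⟩ := hne
  set π : cycloRing ζ := 1 - cycloZeta ζ with hπdef
  have hn1 : 1 < r ^ a := Nat.one_lt_pow (by omega) hr.one_lt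
  have hπ0 : π ≠ 0 := by
    intro h
    have h2 : ((π : cycloRing ζ) : ℂ) = 0 := by rw [h]; rfl
    have h3 : (1 : ℂ) - ζ = 0 := by
      push_cast [hπdef] at h2; simpa [cycloZeta] using h2
    exact hζ.ne_one hn1 (sub_eq_zero.mp h3).symm
  -- ℤ[ζ] is a Noetherian domain
  have hint : IsIntegral ℤ ζ := hζ.isIntegral (by positivity)
  haveI := cyclo_noetherian r a hr ha ζ hζ
  haveI := cyclo_domain ζ
  -- maps are ℤ[ζ]-semilinear
  have smul_map : ∀ (φ : M →ₗ[A] N) (c : cycloRing ζ) (x : M), φ (c • x) = c • φ x := by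
    intro φ c x
    rw [← algebraMap_smul A c x, map_smul, algebraMap_smul]
  -- division by π
  have key : ∀ φ : M →ₗ[A] N, (∀ x, φ x ∈ pModule ζ A N) →
      ∃ φ' : M →ₗ[A] N, π • φ' = φ := by
    intro φ hφ
    have hinj : Function.Injective (π • (LinearMap.id : N →ₗ[A] N)) := by
      intro y z h
      simp only [LinearMap.smul_apply, LinearMap.id_apply] at h
      exact smul_right_injective N hπ0 h
    refine ⟨((LinearEquiv.ofInjective _ hinj).symm.toLinearMap).comp
      (φ.codRestrict _ hφ), ?_⟩
    ext x
    have h4 := congrArg Subtype.val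
      ((LinearEquiv.ofInjective _ hinj).apply_symm_apply ⟨φ x, hφ x⟩)
    rw [LinearEquiv.ofInjective_apply] at h4
    simp only [LinearMap.smul_apply, LinearMap.id_apply] at h4
    simp only [LinearMap.smul_apply, LinearMap.comp_apply, LinearEquiv.coe_coe]
    exact h4
  -- main reduction
  suffices h : ∃ φ : M →ₗ[A] N, ∃ x₀ : M, φ x₀ ∉ pModule ζ A N by
    obtain ⟨φ, x₀, hx₀⟩ := h
    have hle : pModule ζ A M ≤ (pModule ζ A N).comap φ := by
      intro x hx
      obtain ⟨y, rfl⟩ := (mem_pModule_iff ζ A M x).mp hx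
      exact (mem_pModule_iff ζ A N _).mpr ⟨φ y, (smul_map φ _ y).symm⟩
    refine ⟨Submodule.mapQ _ _ φ hle, ?_⟩
    intro h0
    apply hx₀
    have h1 := congrArg (fun g => g (Submodule.Quotient.mk x₀)) h0
    simp only [Submodule.mapQ_apply, LinearMap.zero_apply] at h1
    exact (Submodule.Quotient.mk_eq_zero _).mp h1
  by_contra hall
  push_neg at hall
  have div : ∀ k : ℕ, ∃ φ : M →ₗ[A] N, ψ = (π ^ k) • φ := by
    intro k
    induction k with
    | zero => exact ⟨ψ, by simp⟩
    | succ k ih =>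
      obtain ⟨φ, hφ⟩ := ih
      obtain ⟨φ', hφ'⟩ := key φ (hall φ)
      exact ⟨φ', by rw [hφ, ← hφ', pow_succ, mul_smul]⟩
  obtain ⟨x₀, hx₀⟩ : ∃ x, ψ x ≠ 0 := by
    by_contra h
    push_neg at h
    exact hψ (LinearMap.ext h)
  set b := Module.Free.chooseBasis (cycloRing ζ) N
  obtain ⟨i, hi⟩ : ∃ i, b.repr (ψ x₀) i ≠ 0 := by
    by_contra h
    push_neg at h
    exact hx₀ ((LinearEquiv.map_eq_zero_iff b.repr).mp (Finsupp.ext h))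
  have hc : ∀ k, b.repr (ψ x₀) i ∈ Ideal.span {π} ^ k := by
    intro k
    obtain ⟨φ, hφ⟩ := div k
    rw [Ideal.span_singleton_pow, Ideal.mem_span_singleton]
    refine ⟨b.coord i (φ x₀), ?_⟩
    have h1 : ψ x₀ = (π ^ k) • (φ x₀) := by rw [hφ]; rfl
    have h2 : b.coord i (ψ x₀) = (π ^ k) * b.coord i (φ x₀) := by
      rw [h1]; exact (b.coord i).map_smul _ _
    simpa [Module.Basis.coord_apply] using h2
  have hne_top : Ideal.span {π} ≠ ⊤ := fun htop =>
    pi_not_unit r a hr ha ζ hζ (Ideal.span_singleton_eq_top.mp htop)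
  have hbot := Ideal.iInf_pow_eq_bot_of_isDomain (I := Ideal.span {π}) hne_top
  have hz : b.repr (ψ x₀) i = 0 := by
    rw [← Ideal.mem_bot, ← hbot]
    exact Submodule.mem_iInf _ |>.mpr hc
  exact hi hz

end
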